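/- Let R be a commutative noetherian ring, S a multiplicatively closed subset, and X a full subcategory of finitely generated R-modules closed under kernels of arbitrary morphisms between its objects. Then the subcategory X_S := { M_S : M ∈ X } of finitely generated R_S-modules is closed under kernels: for any M, N ∈ X and any R_S-linear map f : M_S → N_S, the kernel of f is isomorphic to L_S for some L ∈ X. -/

import Mathlib

/-- Upgrade an `R`-linear equivalence between modules over a localization of `R`
to a linear equivalence over the localization. -/
noncomputable def LinearEquiv.extendScalarsOfIsLocalizationAux
    {R : Type} [CommRing R] (S : Submonoid R)
    (A : Type*) [CommRing A] [Algebra R A] [IsLocalization S A]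
    {P Q : Type*} [AddCommGroup P] [Module R P] [Module A P] [IsScalarTower R A P]
    [AddCommGroup Q] [Module R Q] [Module A Q] [IsScalarTower R A Q]
    (e : P ≃ₗ[R] Q) : P ≃ₗ[A] Q :=
  LinearEquiv.ofLinear (e.toLinearMap.extendScalarsOfIsLocalization S A)
    (e.symm.toLinearMap.extendScalarsOfIsLocalization S A)
    (by ext x; simp) (by ext x; simp)

/-- Let `R` be a commutative noetherian ring, `S` a multiplicatively closed subset, and
`X` an isomorphism-closed collection of finitely generated `R`-modules closed under
kernels of morphisms between its objects.  Then the localized subcategory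
`X_S = { M_S : M ∈ X }` is closed under kernels: for `M, N ∈ X` and any
`R_S`-linear `f : M_S → N_S`, the kernel of `f` is isomorphic to `L_S` for some
`L ∈ X`. -/
theorem localized_subcategory_closed_under_kernels
    (R : Type) [CommRing R] [IsNoetherianRing R] (S : Submonoid R)
    (X : ∀ (M : Type) [AddCommGroup M] [Module R M], Prop)
    (hX_fg : ∀ (M : Type) [AddCommGroup M] [Module R M], X M → Module.Finite R M)
    (hX_iso : ∀ (M N : Type) [AddCommGroup M] [Module R M] [AddCommGroup N] [Module R N],
      X M → Nonempty (M ≃ₗ[R] N) → X N)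
    (hX_ker : ∀ (M N : Type) [AddCommGroup M] [Module R M] [AddCommGroup N] [Module R N]
      (f : M →ₗ[R] N), X M → X N → X (LinearMap.ker f))
    (M N : Type) [AddCommGroup M] [Module R M] [AddCommGroup N] [Module R N]
    (hM : X M) (hN : X N)
    (f : LocalizedModule S M →ₗ[Localization S] LocalizedModule S N) :
    ∃ (L : Type) (_ : AddCommGroup L) (_ : Module R L), X L ∧
      Nonempty ((LinearMap.ker f) ≃ₗ[Localization S] LocalizedModule S L) := by
  have hMfin : Module.Finite R M := hX_fg M hM
  have hMfp : Module.FinitePresentation R M := Module.finitePresentation_of_finite R M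
  obtain ⟨g, s, hg⟩ := Module.FinitePresentation.exists_lift_of_isLocalizedModule S
    (LocalizedModule.mkLinearMap S N)
    ((f.restrictScalars R) ∘ₗ LocalizedModule.mkLinearMap S M)
  set F := IsLocalizedModule.map S (LocalizedModule.mkLinearMap S M)
    (LocalizedModule.mkLinearMap S N) g with hF
  have hkey : F = (s : R) • (f.restrictScalars R) := by
    apply IsLocalizedModule.ext S (LocalizedModule.mkLinearMap S M)
      (IsLocalizedModule.map_units (LocalizedModule.mkLinearMap S N))
    rw [hF, IsLocalizedModule.map_comp, hg, LinearMap.smul_comp]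
    rfl
  have hsinj : Function.Injective (fun y : LocalizedModule S N => (s : R) • y) := by
    have hu := IsLocalizedModule.map_units (LocalizedModule.mkLinearMap S N) s
    intro a b hab
    exact ((Module.End.isUnit_iff _).mp hu).injective hab
  have hker : LinearMap.ker F = (LinearMap.ker f).restrictScalars R := by
    ext x
    simp only [LinearMap.mem_ker, Submodule.restrictScalars_mem, hkey, LinearMap.smul_apply,
      LinearMap.coe_restrictScalars]
    constructor
    · intro h
      have : (s : R) • f x = (s : R) • (0 : LocalizedModule S N) := by simpa using h
      exact hsinj this
    · intro h; rw [h, smul_zero]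
  have hIL : IsLocalizedModule S (LinearMap.toKerIsLocalized S
      (LocalizedModule.mkLinearMap S M) (LocalizedModule.mkLinearMap S N) g) :=
    LinearMap.toKerLocalized_isLocalizedModule (S := Localization S) S
      (LocalizedModule.mkLinearMap S M) (LocalizedModule.mkLinearMap S N) g
  have e1 : LocalizedModule S (LinearMap.ker g) ≃ₗ[R] LinearMap.ker F :=
    IsLocalizedModule.iso S (LinearMap.toKerIsLocalized S
      (LocalizedModule.mkLinearMap S M) (LocalizedModule.mkLinearMap S N) g)
  have e2 : LinearMap.ker F ≃ₗ[R] (LinearMap.ker f).restrictScalars R :=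
    LinearEquiv.ofEq _ _ hker
  have e3 : ((LinearMap.ker f).restrictScalars R) ≃ₗ[R] LinearMap.ker f :=
    ((LinearMap.ker f).restrictScalarsEquiv R).restrictScalars R
  have e : LinearMap.ker f ≃ₗ[R] LocalizedModule S (LinearMap.ker g) :=
    (e1.trans (e2.trans e3)).symm
  exact ⟨LinearMap.ker g, inferInstance, inferInstance, hX_ker M N g hM hN,
    ⟨LinearEquiv.extendScalarsOfIsLocalizationAux S (Localization S) e⟩⟩
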